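/- For every integer d ≥ 2, the space SC_d(1,1;o) = {((x,r),(y,s)) ∈ (ℝ^d × ℝ)² : r > 0, s > 0, x_d ≥ r, ‖x‖ + r ≤ 1, y_d = 0, ‖y‖ + s ≤ 1, and ‖x − y‖ ≥ r + s} (the configurations of one ball and one nonoverlapping semiball in the closed upper unit semiball of ℝ^d), with the subspace topology, is contractible. -/
import Mathlib
set_option maxHeartbeats 1000000

noncomputable section
namespace SwissAux

open scoped RealInnerProductSpace

variable {d : ℕ}

def ee (i : Fin d) : EuclideanSpace ℝ (Fin d) := EuclideanSpace.single i 1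

def flat (i : Fin d) (x : EuclideanSpace ℝ (Fin d)) : EuclideanSpace ℝ (Fin d) :=
  x - x i • ee i

lemma ee_apply (i : Fin d) : ee i i = (1 : ℝ) := by simp [ee]

lemma norm_ee (i : Fin d) : ‖ee i‖ = 1 := by simp [ee]

lemma inner_ee (i : Fin d) (z : EuclideanSpace ℝ (Fin d)) : ⟪z, ee i⟫ = z i := by
  rw [ee, EuclideanSpace.inner_single_right]; simp

lemma flat_apply (i : Fin d) (x : EuclideanSpace ℝ (Fin d)) : flat i x i = 0 := by
  simp [flat, PiLp.sub_apply, PiLp.smul_apply, ee_apply]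

lemma decomp (i : Fin d) (x : EuclideanSpace ℝ (Fin d)) : flat i x + x i • ee i = x := by
  simp [flat]

lemma norm_sq_add_smul (i : Fin d) (z : EuclideanSpace ℝ (Fin d)) (hz : z i = 0) (a : ℝ) :
    ‖z + a • ee i‖ ^ 2 = ‖z‖ ^ 2 + a ^ 2 := by
  have h1 : ⟪z, a • ee i⟫ = 0 := by
    rw [real_inner_smul_right, inner_ee, hz, mul_zero]
  rw [norm_add_sq_real, h1, norm_smul, norm_ee]
  simp [sq_abs]

lemma norm_sq_decomp (i : Fin d) (x : EuclideanSpace ℝ (Fin d)) :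
    ‖x‖ ^ 2 = ‖flat i x‖ ^ 2 + (x i) ^ 2 := by
  conv_lhs => rw [← decomp i x]
  exact norm_sq_add_smul i _ (flat_apply i x) _

lemma coord_le_norm (i : Fin d) (x : EuclideanSpace ℝ (Fin d)) : x i ≤ ‖x‖ := by
  nlinarith [norm_sq_decomp i x, sq_nonneg ‖flat i x‖, norm_nonneg x, sq_nonneg (x i - ‖x‖)]

lemma add_smul_apply (i : Fin d) (z : EuclideanSpace ℝ (Fin d)) (hz : z i = 0) (a : ℝ) :
    (z + a • ee i) i = a := by
  simp [PiLp.add_apply, PiLp.smul_apply, hz, ee_apply]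

lemma flat_add_smul (i : Fin d) (z : EuclideanSpace ℝ (Fin d)) (hz : z i = 0) (a : ℝ) :
    flat i (z + a • ee i) = z := by
  rw [flat, add_smul_apply i z hz a]
  abel


abbrev Tot (d : ℕ) := (EuclideanSpace ℝ (Fin d) × ℝ) × (EuclideanSpace ℝ (Fin d) × ℝ)

def P (i : Fin d) (c : Tot d) : Prop :=
  0 < c.1.2 ∧ 0 < c.2.2 ∧
    c.1.1 i ≥ c.1.2 ∧ ‖c.1.1‖ + c.1.2 ≤ 1 ∧
    c.2.1 i = 0 ∧ ‖c.2.1‖ + c.2.2 ≤ 1 ∧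
    ‖c.1.1 - c.2.1‖ ≥ c.1.2 + c.2.2

/-- Stage A: shrink both radii towards `min · (1/8)`. -/
def σA (t : ℝ) (c : Tot d) : Tot d :=
  ((c.1.1, (1 - t) * c.1.2 + t * min c.1.2 (1/8)),
   (c.2.1, (1 - t) * c.2.2 + t * min c.2.2 (1/8)))

/-- Stage B: raise the ball vertically to the boundary sphere. -/
def σB (i : Fin d) (t : ℝ) (c : Tot d) : Tot d :=
  ((flat i c.1.1 +
      ((1 - t) * c.1.1 i + t * Real.sqrt ((1 - c.1.2) ^ 2 - ‖flat i c.1.1‖ ^ 2)) • ee i,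
    c.1.2), c.2)

/-- Stage C: slide the ball along the boundary spherical cap to the north pole. -/
def σC (i : Fin d) (t : ℝ) (c : Tot d) : Tot d :=
  (((1 - t) • flat i c.1.1 +
      Real.sqrt ((1 - c.1.2) ^ 2 - (1 - t) ^ 2 * ‖flat i c.1.1‖ ^ 2) • ee i,
    c.1.2), c.2)

/-- Stage D: move everything to the base configuration. -/
def σD (i : Fin d) (t : ℝ) (c : Tot d) : Tot d :=
  (((1 - ((1 - t) * c.1.2 + t * (1/8))) • ee i, (1 - t) * c.1.2 + t * (1/8)),
   ((1 - t) • c.2.1, (1 - t) * c.2.2 + t * (1/8)))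

lemma memA {i : Fin d} {t : ℝ} (h0 : 0 ≤ t) (h1 : t ≤ 1) {c : Tot d} (hc : P i c) :
    P i (σA t c) := by
  obtain ⟨hr, hs, hxd, hx1, hyd, hy1, hsep⟩ := hc
  set r := c.1.2; set s := c.2.2
  have hmr : 0 < min r (1/8) := lt_min hr (by norm_num)
  have hms : 0 < min s (1/8) := lt_min hs (by norm_num)
  have hmr' : min r (1/8) ≤ r := min_le_left _ _
  have hms' : min s (1/8) ≤ s := min_le_left _ _
  have h2 : (1 - t) * r + t * min r (1/8) ≤ r := by
    have := mul_nonneg h0 (by linarith : (0:ℝ) ≤ r - min r (1/8)); linarith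
  have h3 : (1 - t) * s + t * min s (1/8) ≤ s := by
    have := mul_nonneg h0 (by linarith : (0:ℝ) ≤ s - min s (1/8)); linarith
  have h4 : 0 < (1 - t) * r + t * min r (1/8) := by
    have h6 := mul_nonneg (by linarith : (0:ℝ) ≤ 1 - t) hmr.le
    have h7 := mul_nonneg h0 hmr.le
    rcases lt_or_ge t 1 with h | h
    · have := mul_pos (by linarith : (0:ℝ) < 1 - t) hr; linarith
    · have : t = 1 := le_antisymm h1 h; rw [this]; simpa using hmr
  have h5 : 0 < (1 - t) * s + t * min s (1/8) := by
    rcases lt_or_ge t 1 with h | h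
    · have := mul_pos (by linarith : (0:ℝ) < 1 - t) hs
      have := mul_nonneg h0 hms.le; linarith
    · have : t = 1 := le_antisymm h1 h; rw [this]; simpa using hms
  refine ⟨?_, ?_, ?_, ?_, ?_, ?_, ?_⟩ <;> simp only [σA] <;> [skip; skip; skip; skip; exact hyd; skip; skip] <;> linarith


lemma memB {i : Fin d} {t : ℝ} (h0 : 0 ≤ t) (h1 : t ≤ 1) {c : Tot d} (hc : P i c) :
    P i (σB i t c) := by
  obtain ⟨hr, hs, hxd, hx1, hyd, hy1, hsep⟩ := hc
  have hdec : ‖c.1.1‖ ^ 2 = ‖flat i c.1.1‖ ^ 2 + (c.1.1 i) ^ 2 := norm_sq_decomp i c.1.1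
  have hx0 : (0:ℝ) ≤ ‖c.1.1‖ := norm_nonneg _
  have ha0 : (0:ℝ) ≤ c.1.1 i := le_trans hr.le hxd
  have hxn2 : ‖c.1.1‖ ^ 2 ≤ (1 - c.1.2) ^ 2 :=
    pow_le_pow_left₀ hx0 (by linarith) 2
  have harg : (c.1.1 i) ^ 2 ≤ (1 - c.1.2) ^ 2 - ‖flat i c.1.1‖ ^ 2 := by linarith
  have harg0 : 0 ≤ (1 - c.1.2) ^ 2 - ‖flat i c.1.1‖ ^ 2 := le_trans (sq_nonneg _) harg
  set h := Real.sqrt ((1 - c.1.2) ^ 2 - ‖flat i c.1.1‖ ^ 2) with hh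
  have hh2 : h ^ 2 = (1 - c.1.2) ^ 2 - ‖flat i c.1.1‖ ^ 2 := Real.sq_sqrt harg0
  have hah : c.1.1 i ≤ h := by
    have h' := Real.sqrt_le_sqrt harg
    rwa [Real.sqrt_sq ha0] at h'
  set ξ := (1 - t) * c.1.1 i + t * h with hξ
  have hξa : c.1.1 i ≤ ξ := by
    have := mul_nonneg h0 (by linarith : (0:ℝ) ≤ h - c.1.1 i); rw [hξ]; linarith
  have hξh : ξ ≤ h := by
    have := mul_nonneg (by linarith : (0:ℝ) ≤ 1 - t) (by linarith : (0:ℝ) ≤ h - c.1.1 i)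
    rw [hξ]; linarith
  have hξ0 : 0 ≤ ξ := le_trans ha0 hξa
  have hui : flat i c.1.1 i = 0 := flat_apply i c.1.1
  have hcoord : (flat i c.1.1 + ξ • ee i) i = ξ := add_smul_apply i _ hui ξ
  have hnsq : ‖flat i c.1.1 + ξ • ee i‖ ^ 2 = ‖flat i c.1.1‖ ^ 2 + ξ ^ 2 :=
    norm_sq_add_smul i _ hui ξ
  have hnle : ‖flat i c.1.1 + ξ • ee i‖ ≤ 1 - c.1.2 := by
    refine le_of_pow_le_pow_left₀ two_ne_zero (by linarith) ?_
    rw [hnsq]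
    have := pow_le_pow_left₀ hξ0 hξh 2
    linarith
  have huy : (flat i c.1.1 - c.2.1) i = 0 := by
    rw [PiLp.sub_apply, hui, hyd, sub_zero]
  have hxyeq : c.1.1 - c.2.1 = (flat i c.1.1 - c.2.1) + c.1.1 i • ee i := by
    simp only [flat]; abel
  have hxysq : ‖c.1.1 - c.2.1‖ ^ 2 = ‖flat i c.1.1 - c.2.1‖ ^ 2 + (c.1.1 i) ^ 2 := by
    rw [hxyeq]; exact norm_sq_add_smul i _ huy _
  have hBeq : flat i c.1.1 + ξ • ee i - c.2.1 = (flat i c.1.1 - c.2.1) + ξ • ee i := by abel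
  have hBsq : ‖flat i c.1.1 + ξ • ee i - c.2.1‖ ^ 2 = ‖flat i c.1.1 - c.2.1‖ ^ 2 + ξ ^ 2 := by
    rw [hBeq]; exact norm_sq_add_smul i _ huy _
  have hrs0 : (0:ℝ) ≤ c.1.2 + c.2.2 := by linarith
  have hsep2 : (c.1.2 + c.2.2) ^ 2 ≤ ‖c.1.1 - c.2.1‖ ^ 2 := pow_le_pow_left₀ hrs0 hsep 2
  refine ⟨hr, hs, ?_, ?_, hyd, hy1, ?_⟩ <;> simp only [σB] <;> rw [← hh, ← hξ]
  · rw [hcoord]; exact le_trans hxd hξa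
  · linarith
  · refine le_of_pow_le_pow_left₀ two_ne_zero (norm_nonneg _) ?_
    rw [hBsq]
    have := pow_le_pow_left₀ ha0 hξa 2
    linarith

lemma memC {i : Fin d} {t : ℝ} (h0 : 0 ≤ t) (h1 : t ≤ 1) {c : Tot d} (hc : P i c)
    (hr8 : c.1.2 ≤ 1/8) (hs8 : c.2.2 ≤ 1/8) : P i (σC i t c) := by
  obtain ⟨hr, hs, hxd, hx1, hyd, hy1, hsep⟩ := hc
  have hdec : ‖c.1.1‖ ^ 2 = ‖flat i c.1.1‖ ^ 2 + (c.1.1 i) ^ 2 := norm_sq_decomp i c.1.1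
  have hx0 : (0:ℝ) ≤ ‖c.1.1‖ := norm_nonneg _
  have ha0 : (0:ℝ) ≤ c.1.1 i := le_trans hr.le hxd
  have hxn2 : ‖c.1.1‖ ^ 2 ≤ (1 - c.1.2) ^ 2 :=
    pow_le_pow_left₀ hx0 (by linarith) 2
  have harg : (c.1.1 i) ^ 2 ≤ (1 - c.1.2) ^ 2 - ‖flat i c.1.1‖ ^ 2 := by linarith
  have hu0 : (0:ℝ) ≤ ‖flat i c.1.1‖ := norm_nonneg _
  have h1t : (1 - t) ^ 2 ≤ 1 := by
    have := mul_nonneg h0 (by linarith : (0:ℝ) ≤ 2 - t); nlinarith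
  have harg' : (c.1.1 i) ^ 2 ≤ (1 - c.1.2) ^ 2 - (1 - t) ^ 2 * ‖flat i c.1.1‖ ^ 2 := by
    have := mul_le_mul_of_nonneg_right h1t (sq_nonneg ‖flat i c.1.1‖)
    rw [one_mul] at this; linarith
  have harg0 : 0 ≤ (1 - c.1.2) ^ 2 - (1 - t) ^ 2 * ‖flat i c.1.1‖ ^ 2 :=
    le_trans (sq_nonneg _) harg'
  set ρ := Real.sqrt ((1 - c.1.2) ^ 2 - (1 - t) ^ 2 * ‖flat i c.1.1‖ ^ 2) with hρ
  have hρ2 : ρ ^ 2 = (1 - c.1.2) ^ 2 - (1 - t) ^ 2 * ‖flat i c.1.1‖ ^ 2 := Real.sq_sqrt harg0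
  have hρa : c.1.1 i ≤ ρ := by
    have h' := Real.sqrt_le_sqrt harg'
    rwa [Real.sqrt_sq ha0] at h'
  have hρ0 : 0 ≤ ρ := le_trans ha0 hρa
  have hui : ((1 - t) • flat i c.1.1) i = 0 := by
    rw [PiLp.smul_apply, flat_apply]; simp
  have hcoord : ((1 - t) • flat i c.1.1 + ρ • ee i) i = ρ := add_smul_apply i _ hui ρ
  have hsm : ‖(1 - t) • flat i c.1.1‖ ^ 2 = (1 - t) ^ 2 * ‖flat i c.1.1‖ ^ 2 := by
    rw [norm_smul, mul_pow, Real.norm_eq_abs, sq_abs]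
  have hnsq : ‖(1 - t) • flat i c.1.1 + ρ • ee i‖ ^ 2 = (1 - c.1.2) ^ 2 := by
    rw [norm_sq_add_smul i _ hui ρ, hsm, hρ2]; ring
  have hnle : ‖(1 - t) • flat i c.1.1 + ρ • ee i‖ ≤ 1 - c.1.2 := by
    refine le_of_pow_le_pow_left₀ two_ne_zero (by linarith) ?_
    rw [hnsq]
  -- separation
  have huy : ((1 - t) • flat i c.1.1 - c.2.1) i = 0 := by
    rw [PiLp.sub_apply, hui, hyd, sub_zero]
  have hCeq : (1 - t) • flat i c.1.1 + ρ • ee i - c.2.1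
      = ((1 - t) • flat i c.1.1 - c.2.1) + ρ • ee i := by abel
  have hCsq : ‖(1 - t) • flat i c.1.1 + ρ • ee i - c.2.1‖ ^ 2
      = ‖(1 - t) • flat i c.1.1 - c.2.1‖ ^ 2 + ρ ^ 2 := by
    rw [hCeq]; exact norm_sq_add_smul i _ huy _
  have hexp : ‖(1 - t) • flat i c.1.1 - c.2.1‖ ^ 2
      = (1 - t) ^ 2 * ‖flat i c.1.1‖ ^ 2 - 2 * (1 - t) * ⟪flat i c.1.1, c.2.1⟫ + ‖c.2.1‖ ^ 2 := by
    rw [norm_sub_sq_real, hsm, real_inner_smul_left]; ring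
  have huy2 : ‖flat i c.1.1 - c.2.1‖ ^ 2
      = ‖flat i c.1.1‖ ^ 2 - 2 * ⟪flat i c.1.1, c.2.1⟫ + ‖c.2.1‖ ^ 2 := norm_sub_sq_real _ _
  have hxyeq : c.1.1 - c.2.1 = (flat i c.1.1 - c.2.1) + c.1.1 i • ee i := by
    simp only [flat]; abel
  have huy0 : (flat i c.1.1 - c.2.1) i = 0 := by
    rw [PiLp.sub_apply, flat_apply, hyd, sub_zero]
  have hxysq : ‖c.1.1 - c.2.1‖ ^ 2 = ‖flat i c.1.1 - c.2.1‖ ^ 2 + (c.1.1 i) ^ 2 := by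
    rw [hxyeq]; exact norm_sq_add_smul i _ huy0 _
  have hrs0 : (0:ℝ) ≤ c.1.2 + c.2.2 := by linarith
  have hsep2 : (c.1.2 + c.2.2) ^ 2 ≤ ‖c.1.1 - c.2.1‖ ^ 2 := pow_le_pow_left₀ hrs0 hsep 2
  have hy0 : (0:ℝ) ≤ ‖c.2.1‖ := norm_nonneg _
  have hG : (c.1.2 + c.2.2) ^ 2 ≤ ‖(1 - t) • flat i c.1.1 + ρ • ee i - c.2.1‖ ^ 2 := by
    rw [hCsq, hexp, hρ2]
    rcases le_or_gt ⟪flat i c.1.1, c.2.1⟫ 0 with hip | hip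
    · have hkey : (0:ℝ) ≤ (1 - 2*c.1.2 - c.2.2) * (1 + c.2.2) :=
        mul_nonneg (by linarith) (by linarith)
      have hipf : (0:ℝ) ≤ (1 - t) * (-⟪flat i c.1.1, c.2.1⟫) :=
        mul_nonneg (by linarith) (by linarith)
      have hy2 := sq_nonneg ‖c.2.1‖
      linarith
    · have hipf : (0:ℝ) ≤ t * ⟪flat i c.1.1, c.2.1⟫ := mul_nonneg h0 hip.le
      linarith
  refine ⟨hr, hs, ?_, ?_, hyd, hy1, ?_⟩ <;> simp only [σC] <;> rw [← hρ]
  · rw [hcoord]; exact le_trans hxd hρa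
  · linarith
  · exact le_of_pow_le_pow_left₀ two_ne_zero (norm_nonneg _) hG

lemma memD {i : Fin d} {t : ℝ} (h0 : 0 ≤ t) (h1 : t ≤ 1) {c : Tot d} (hc : P i c)
    (hr8 : c.1.2 ≤ 1/8) (hs8 : c.2.2 ≤ 1/8) : P i (σD i t c) := by
  obtain ⟨hr, hs, hxd, hx1, hyd, hy1, hsep⟩ := hc
  have hr' : 0 < (1 - t) * c.1.2 + t * (1/8) := by
    have := mul_nonneg h0 (by linarith : (0:ℝ) ≤ 1/8 - c.1.2)
    have := mul_nonneg (by linarith : (0:ℝ) ≤ 1 - t) hr.le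
    rcases lt_or_ge t 1 with h | h
    · have := mul_pos (by linarith : (0:ℝ) < 1 - t) hr; linarith
    · have ht : t = 1 := le_antisymm h1 h; rw [ht]; norm_num
  have hr'8 : (1 - t) * c.1.2 + t * (1/8) ≤ 1/8 := by
    have := mul_nonneg (by linarith : (0:ℝ) ≤ 1 - t) (by linarith : (0:ℝ) ≤ 1/8 - c.1.2)
    linarith
  have hs' : 0 < (1 - t) * c.2.2 + t * (1/8) := by
    rcases lt_or_ge t 1 with h | h
    · have := mul_pos (by linarith : (0:ℝ) < 1 - t) hs
      have := mul_nonneg h0 (by norm_num : (0:ℝ) ≤ 1/8); linarith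
    · have ht : t = 1 := le_antisymm h1 h; rw [ht]; norm_num
  have hs'8 : (1 - t) * c.2.2 + t * (1/8) ≤ 1/8 := by
    have := mul_nonneg (by linarith : (0:ℝ) ≤ 1 - t) (by linarith : (0:ℝ) ≤ 1/8 - c.2.2)
    linarith
  have hxco : ((1 - ((1 - t) * c.1.2 + t * (1/8))) • ee i) i
      = 1 - ((1 - t) * c.1.2 + t * (1/8)) := by
    rw [PiLp.smul_apply, ee_apply]; simp
  have hxnorm : ‖(1 - ((1 - t) * c.1.2 + t * (1/8))) • ee i‖
      = 1 - ((1 - t) * c.1.2 + t * (1/8)) := by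
    rw [norm_smul, norm_ee, Real.norm_eq_abs, mul_one, abs_of_nonneg (by linarith)]
  have hyco : ((1 - t) • c.2.1) i = 0 := by rw [PiLp.smul_apply, hyd]; simp
  have hynorm : ‖(1 - t) • c.2.1‖ = (1 - t) * ‖c.2.1‖ := by
    rw [norm_smul, Real.norm_eq_abs, abs_of_nonneg (by linarith)]
  have hzco : ((1 - ((1 - t) * c.1.2 + t * (1/8))) • ee i - (1 - t) • c.2.1) i
      = 1 - ((1 - t) * c.1.2 + t * (1/8)) := by
    rw [PiLp.sub_apply, hxco, hyco, sub_zero]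
  have hzn := coord_le_norm i ((1 - ((1 - t) * c.1.2 + t * (1/8))) • ee i - (1 - t) • c.2.1)
  rw [hzco] at hzn
  have hy0 : (0:ℝ) ≤ ‖c.2.1‖ := norm_nonneg _
  refine ⟨hr', hs', ?_, ?_, hyco, ?_, ?_⟩ <;> simp only [σD]
  · rw [hxco]; linarith
  · rw [hxnorm]; linarith
  · rw [hynorm]
    have := mul_le_mul_of_nonneg_left (by linarith : ‖c.2.1‖ ≤ 1 - c.2.2)
      (by linarith : (0:ℝ) ≤ 1 - t)
    linarith
  · linarith


lemma σA_zero (c : Tot d) : σA 0 c = c := by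
  obtain ⟨⟨x, r⟩, y, s⟩ := c
  simp [σA]

lemma σB_zero (i : Fin d) (c : Tot d) : σB i 0 c = c := by
  obtain ⟨⟨x, r⟩, y, s⟩ := c
  simp only [σB]
  norm_num
  exact decomp i x

lemma σC_zero (i : Fin d) (c : Tot d) : σC i 0 (σB i 1 c) = σB i 1 c := by
  obtain ⟨⟨x, r⟩, y, s⟩ := c
  simp only [σB, σC]
  norm_num
  rw [flat_add_smul i _ (flat_apply i x)]

lemma σD_zero (i : Fin d) (c : Tot d) (hr1 : c.1.2 ≤ 1) : σD i 0 (σC i 1 c) = σC i 1 c := by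
  obtain ⟨⟨x, r⟩, y, s⟩ := c
  simp only [σC, σD]
  norm_num
  rw [Real.sqrt_sq (by linarith : (0:ℝ) ≤ 1 - r)]

lemma σD_one (i : Fin d) (c : Tot d) :
    σD i 1 c = (((7/8 : ℝ) • ee i, 1/8), (0, 1/8)) := by
  obtain ⟨⟨x, r⟩, y, s⟩ := c
  simp only [σD]
  norm_num

lemma shrunk_r (i : Fin d) (c : Tot d) : (σB i 1 (σA 1 c)).1.2 ≤ 1/8 := by
  show (1 - 1) * c.1.2 + 1 * min c.1.2 (1/8) ≤ 1/8
  simpa using min_le_right c.1.2 (1/8)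

lemma shrunk_s (i : Fin d) (c : Tot d) : (σB i 1 (σA 1 c)).2.2 ≤ 1/8 := by
  show (1 - 1) * c.2.2 + 1 * min c.2.2 (1/8) ≤ 1/8
  simpa using min_le_right c.2.2 (1/8)

lemma cont_proj (i : Fin d) : Continuous fun x : EuclideanSpace ℝ (Fin d) => x i :=
  (EuclideanSpace.proj (𝕜 := ℝ) i).continuous

lemma cont_flat (i : Fin d) : Continuous (flat i) :=
  continuous_id.sub ((cont_proj i).smul continuous_const)

lemma contA : Continuous fun p : ℝ × Tot d => σA p.1 p.2 := by
  unfold σA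
  fun_prop

lemma contB (i : Fin d) : Continuous fun p : ℝ × Tot d => σB i p.1 p.2 := by
  unfold σB
  have h1 : Continuous fun p : ℝ × Tot d => flat i p.2.1.1 :=
    (cont_flat i).comp (continuous_fst.comp (continuous_fst.comp continuous_snd))
  have h2 : Continuous fun p : ℝ × Tot d => p.2.1.1 i :=
    (cont_proj i).comp (continuous_fst.comp (continuous_fst.comp continuous_snd))
  have h3 : Continuous fun p : ℝ × Tot d =>
      Real.sqrt ((1 - p.2.1.2) ^ 2 - ‖flat i p.2.1.1‖ ^ 2) := by
    apply Real.continuous_sqrt.comp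
    fun_prop
  fun_prop

lemma contC (i : Fin d) : Continuous fun p : ℝ × Tot d => σC i p.1 p.2 := by
  unfold σC
  have h1 : Continuous fun p : ℝ × Tot d => flat i p.2.1.1 :=
    (cont_flat i).comp (continuous_fst.comp (continuous_fst.comp continuous_snd))
  have h3 : Continuous fun p : ℝ × Tot d =>
      Real.sqrt ((1 - p.2.1.2) ^ 2 - (1 - p.1) ^ 2 * ‖flat i p.2.1.1‖ ^ 2) := by
    apply Real.continuous_sqrt.comp
    fun_prop
  fun_prop

lemma contD (i : Fin d) : Continuous fun p : ℝ × Tot d => σD i p.1 p.2 := by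
  unfold σD
  fun_prop

variable (i : Fin d)

abbrev Spc (i : Fin d) := {c : Tot d // P i c}

def c0 : Spc i :=
  ⟨(((7/8 : ℝ) • ee i, 1/8), (0, 1/8)), by
    refine ⟨by norm_num, by norm_num, ?_, ?_, ?_, ?_, ?_⟩
    · show ((7/8 : ℝ) • ee i) i ≥ 1/8
      rw [PiLp.smul_apply, ee_apply]; norm_num
    · show ‖(7/8 : ℝ) • ee i‖ + 1/8 ≤ 1
      rw [norm_smul, norm_ee, Real.norm_eq_abs, abs_of_nonneg (by norm_num : (0:ℝ) ≤ 7/8)]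
      norm_num
    · show (0 : EuclideanSpace ℝ (Fin d)) i = 0
      rfl
    · show ‖(0 : EuclideanSpace ℝ (Fin d))‖ + 1/8 ≤ 1
      rw [norm_zero]; norm_num
    · show ‖(7/8 : ℝ) • ee i - 0‖ ≥ 1/8 + 1/8
      rw [sub_zero, norm_smul, norm_ee, Real.norm_eq_abs,
        abs_of_nonneg (by norm_num : (0:ℝ) ≤ 7/8)]
      norm_num⟩

def gA : C(Spc i, Spc i) :=
  ⟨fun q => ⟨σA 1 q.1, memA zero_le_one le_rfl q.2⟩,
    (contA.comp (continuous_const.prodMk continuous_subtype_val)).subtype_mk _⟩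

def gB : C(Spc i, Spc i) :=
  ⟨fun q => ⟨σB i 1 (σA 1 q.1),
      memB zero_le_one le_rfl (memA zero_le_one le_rfl q.2)⟩,
    (((contB i).comp (continuous_const.prodMk
      (contA.comp (continuous_const.prodMk continuous_subtype_val))))).subtype_mk _⟩

def gC : C(Spc i, Spc i) :=
  ⟨fun q => ⟨σC i 1 (σB i 1 (σA 1 q.1)),
      memC zero_le_one le_rfl (memB zero_le_one le_rfl (memA zero_le_one le_rfl q.2))
        (shrunk_r i q.1) (shrunk_s i q.1)⟩,
    ((contC i).comp (continuous_const.prodMk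
      ((contB i).comp (continuous_const.prodMk
        (contA.comp (continuous_const.prodMk continuous_subtype_val)))))).subtype_mk _⟩

def HA : (ContinuousMap.id (Spc i)).Homotopy (gA i) where
  toFun := fun p => ⟨σA (p.1 : ℝ) p.2.1, memA p.1.2.1 p.1.2.2 p.2.2⟩
  continuous_toFun := by
    exact (contA.comp ((continuous_subtype_val.comp continuous_fst).prodMk
      (continuous_subtype_val.comp continuous_snd))).subtype_mk _
  map_zero_left q := Subtype.ext (σA_zero q.1)
  map_one_left q := rfl

def HB : (gA i).Homotopy (gB i) where
  toFun := fun p => ⟨σB i (p.1 : ℝ) (σA 1 p.2.1),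
    memB p.1.2.1 p.1.2.2 (memA zero_le_one le_rfl p.2.2)⟩
  continuous_toFun := by
    exact ((contB i).comp ((continuous_subtype_val.comp continuous_fst).prodMk
      (contA.comp (continuous_const.prodMk
        (continuous_subtype_val.comp continuous_snd))))).subtype_mk _
  map_zero_left q := Subtype.ext (σB_zero i _)
  map_one_left q := rfl

def HC : (gB i).Homotopy (gC i) where
  toFun := fun p => ⟨σC i (p.1 : ℝ) (σB i 1 (σA 1 p.2.1)),
    memC p.1.2.1 p.1.2.2
      (memB zero_le_one le_rfl (memA zero_le_one le_rfl p.2.2))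
      (shrunk_r i p.2.1) (shrunk_s i p.2.1)⟩
  continuous_toFun := by
    exact ((contC i).comp ((continuous_subtype_val.comp continuous_fst).prodMk
      ((contB i).comp (continuous_const.prodMk
        (contA.comp (continuous_const.prodMk
          (continuous_subtype_val.comp continuous_snd))))))).subtype_mk _
  map_zero_left q := Subtype.ext (σC_zero i _)
  map_one_left q := rfl

def HD : (gC i).Homotopy (ContinuousMap.const (Spc i) (c0 i)) where
  toFun := fun p => ⟨σD i (p.1 : ℝ) (σC i 1 (σB i 1 (σA 1 p.2.1))),
    memD p.1.2.1 p.1.2.2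
      (memC zero_le_one le_rfl
        (memB zero_le_one le_rfl (memA zero_le_one le_rfl p.2.2))
        (shrunk_r i p.2.1) (shrunk_s i p.2.1))
      (shrunk_r i p.2.1) (shrunk_s i p.2.1)⟩
  continuous_toFun := by
    exact ((contD i).comp ((continuous_subtype_val.comp continuous_fst).prodMk
      ((contC i).comp (continuous_const.prodMk
        ((contB i).comp (continuous_const.prodMk
          (contA.comp (continuous_const.prodMk
            (continuous_subtype_val.comp continuous_snd))))))))).subtype_mk _
  map_zero_left q := Subtype.ext (σD_zero i _ (le_trans (shrunk_r i q.1) (by norm_num)))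
  map_one_left q := Subtype.ext (σD_one i _)

theorem contractible : ContractibleSpace (Spc i) := by
  rw [contractible_iff_id_nullhomotopic]
  exact ⟨c0 i, ⟨(HA i).trans ((HB i).trans ((HC i).trans (HD i)))⟩⟩

end SwissAux

/-- For every integer `d ≥ 2`, the space
`SC_d(1,1;o)` of configurations of one ball `(x,r)` and one nonoverlapping semiball `(y,s)`
in the closed upper unit semiball of `ℝ^d`, i.e.
`{((x,r),(y,s)) : r > 0, s > 0, x_d ≥ r, ‖x‖ + r ≤ 1, y_d = 0, ‖y‖ + s ≤ 1, ‖x − y‖ ≥ r + s}`,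
with the subspace topology, is contractible. -/
theorem swissCheese_one_ball_one_semiball_contractible (d : ℕ) (hd : 2 ≤ d) :
    ContractibleSpace {c : (EuclideanSpace ℝ (Fin d) × ℝ) × (EuclideanSpace ℝ (Fin d) × ℝ) //
      0 < c.1.2 ∧ 0 < c.2.2 ∧
      c.1.1 ⟨d - 1, by omega⟩ ≥ c.1.2 ∧ ‖c.1.1‖ + c.1.2 ≤ 1 ∧
      c.2.1 ⟨d - 1, by omega⟩ = 0 ∧ ‖c.2.1‖ + c.2.2 ≤ 1 ∧
      ‖c.1.1 - c.2.1‖ ≥ c.1.2 + c.2.2} := by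
  exact SwissAux.contractible ⟨d - 1, by omega⟩
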